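/- Let Σ be a finite alphabet and r ∈ ℕ. Define N₀ = 1 and N_{r+1} = N_r · (1 + |Σ|^{N_r}). Then every word w ∈ Σ* with |w| ≥ N_r contains a subword (a contiguous factor) that is a quasipower of order r. -/

import Mathlib

/-- A word is a quasipower of order `0` if it is nonempty; it is a quasipower of order
`n + 1` if it has the form `u * v * u` where `u` is a quasipower of order `n`. -/
def IsQuasipower {A : Type*} : ℕ → FreeMonoid A → Prop
  | 0, w => w ≠ 1
  | n + 1, w => ∃ u v : FreeMonoid A, IsQuasipower n u ∧ w = u * v * u

/-- The bound `N_r`: `N_0 = 1` and `N_{r+1} = N_r · (1 + |Σ|^{N_r})`. -/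
def quasipowerBound (c : ℕ) : ℕ → ℕ
  | 0 => 1
  | r + 1 => quasipowerBound c r * (1 + c ^ quasipowerBound c r)

lemma quasipowerBound_pos (c r : ℕ) : 0 < quasipowerBound c r := by
  induction r with
  | zero => simp [quasipowerBound]
  | succ r ih => exact Nat.mul_pos ih (by positivity)

lemma aux_qp {A : Type*} [Fintype A] (r : ℕ) :
    ∀ l : List A, quasipowerBound (Fintype.card A) r ≤ l.length →
    ∃ u x v : List A, l = u ++ x ++ v ∧ IsQuasipower r (FreeMonoid.ofList x) := by
  induction r with
  | zero =>
    intro l hl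
    refine ⟨[], l, [], by simp, ?_⟩
    intro h
    have h2 : l = [] := by simpa using congrArg FreeMonoid.toList h
    simp [h2, quasipowerBound] at hl
  | succ r ih =>
    intro l hl
    set c := Fintype.card A with hc
    set N := quasipowerBound c r with hNdef
    have hNpos : 0 < N := quasipowerBound_pos c r
    have hlen : N * (1 + c ^ N) ≤ l.length := hl
    have hblock : ∀ k : Fin (1 + c ^ N), k.val * N + N ≤ l.length := by
      intro k
      have hk : k.val + 1 ≤ 1 + c ^ N := k.2
      calc k.val * N + N = (k.val + 1) * N := by ring
        _ ≤ (1 + c ^ N) * N := Nat.mul_le_mul_right _ hk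
        _ = N * (1 + c ^ N) := Nat.mul_comm _ _
        _ ≤ l.length := hlen
    have hlenblock : ∀ k : Fin (1 + c ^ N), ((l.drop (k.val * N)).take N).length = N := by
      intro k
      have := hblock k
      simp only [List.length_take, List.length_drop]
      omega
    set f : Fin (1 + c ^ N) → List.Vector A N :=
      fun k => ⟨(l.drop (k.val * N)).take N, hlenblock k⟩ with hf
    have hcard : Fintype.card (List.Vector A N) < Fintype.card (Fin (1 + c ^ N)) := by
      simp [card_vector, ← hc]
    obtain ⟨i, j, hij, hfij⟩ := Fintype.exists_ne_map_eq_of_card_lt f hcard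
    -- reduce to i.val * N and j.val * N with wlog ordering
    have key : ∀ s t : ℕ, s + N ≤ t → t + N ≤ l.length →
        (l.drop s).take N = (l.drop t).take N →
        ∃ u x v : List A, l = u ++ x ++ v ∧ IsQuasipower (r + 1) (FreeMonoid.ofList x) := by
      intro s t hst htl hb
      set b := (l.drop s).take N with hbdef
      set m := (l.drop (s + N)).take (t - (s + N)) with hmdef
      have hdecomp : l = l.take s ++ b ++ m ++ b ++ l.drop (t + N) := by
        have e1 : b ++ l.drop (t + N) = l.drop t := by
          rw [hb, ← List.drop_drop (i := N) (j := t) (l := l), List.take_append_drop]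
        have e2 : m ++ l.drop t = l.drop (s + N) := by
          have h4 : s + N + (t - (s + N)) = t := by omega
          conv_lhs => rw [hmdef, show l.drop t = (l.drop (s + N)).drop (t - (s + N)) from by
            rw [List.drop_drop, h4]]
          exact List.take_append_drop _ _
        have e3 : b ++ l.drop (s + N) = l.drop s := by
          rw [hbdef, ← List.drop_drop (i := N) (j := s) (l := l), List.take_append_drop]
        calc l = l.take s ++ l.drop s := (List.take_append_drop s l).symm
          _ = l.take s ++ (b ++ (m ++ (b ++ l.drop (t + N)))) := by
              rw [e1, e2, e3]
          _ = l.take s ++ b ++ m ++ b ++ l.drop (t + N) := by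
              simp [List.append_assoc]
      have hblen : N ≤ b.length := by
        rw [hbdef]
        simp only [List.length_take, List.length_drop]
        omega
      obtain ⟨p, u, q, hbpq, hu⟩ := ih b hblen
      refine ⟨l.take s ++ p, u ++ (q ++ m ++ p) ++ u, q ++ l.drop (t + N), ?_, ?_⟩
      · conv_lhs => rw [hdecomp, hbpq]
        simp [List.append_assoc]
      · refine ⟨FreeMonoid.ofList u, FreeMonoid.ofList (q ++ m ++ p), hu, ?_⟩
        simp [FreeMonoid.ofList_append, mul_assoc]
    have hblocks : (l.drop (i.val * N)).take N = (l.drop (j.val * N)).take N := by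
      simpa [hf, List.Vector] using congrArg Subtype.val hfij
    rcases lt_or_gt_of_ne (fun h : i.val = j.val => hij (Fin.ext h)) with h | h
    · exact key (i.val * N) (j.val * N) (by nlinarith) (hblock j) hblocks
    · exact key (j.val * N) (i.val * N) (by nlinarith) (hblock i) hblocks.symm

/-- Every word over a finite alphabet of length at least `N_r` contains a subword that is a
quasipower of order `r`. -/
theorem exists_quasipower_subword {A : Type*} [Fintype A] (r : ℕ) (w : FreeMonoid A)
    (hw : quasipowerBound (Fintype.card A) r ≤ (FreeMonoid.toList w).length) :
    ∃ u x v : FreeMonoid A, w = u * x * v ∧ IsQuasipower r x := by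

  obtain ⟨u, x, v, hl, hx⟩ := aux_qp r (FreeMonoid.toList w) hw
  refine ⟨FreeMonoid.ofList u, FreeMonoid.ofList x, FreeMonoid.ofList v, ?_, hx⟩
  apply FreeMonoid.toList.injective
  simp [hl]
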